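/- Let C be a nonempty subset of H and {x_n} a sequence in H such that (i) for every x ∈ C, lim_{n→∞} ‖x_n − x‖ exists, and (ii) every weak sequential cluster point of {x_n} belongs to C. Then {x_n} converges weakly to a point of C. -/

import Mathlib

open scoped RealInnerProductSpace
open Filter Topology

/-- Weak sequential compactness of bounded sequences in a real Hilbert space. -/
lemma aux_weak_seq_compact
    {H : Type*} [NormedAddCommGroup H] [InnerProductSpace ℝ H] [CompleteSpace H]
    (y : ℕ → H) (M : ℝ) (hM : ∀ n, ‖y n‖ ≤ M) :
    ∃ φ : ℕ → ℕ, StrictMono φ ∧ ∃ p : H,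
      ∀ f : H, Tendsto (fun j => ⟪f, y (φ j)⟫) atTop (nhds ⟪f, p⟫) := by
  -- Step 1: extract a subsequence along which all inner products ⟪y k, y ·⟫ converge.
  set g : ℕ → ℕ → ℝ := fun n k => ⟪y k, y n⟫ with hg
  have hgs : ∀ n, g n ∈ Set.univ.pi (fun _ : ℕ => Set.Icc (-(M*M)) (M*M)) := by
    intro n k _
    have h1 : |⟪y k, y n⟫| ≤ ‖y k‖ * ‖y n‖ := abs_real_inner_le_norm _ _
    have h2 : ‖y k‖ * ‖y n‖ ≤ M * M :=
      mul_le_mul (hM k) (hM n) (norm_nonneg _) ((norm_nonneg _).trans (hM k))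
    exact abs_le.mp (h1.trans h2)
  obtain ⟨L, -, φ, hφ, hconv⟩ :=
    (isCompact_univ_pi (fun _ : ℕ => isCompact_Icc)).isSeqCompact hgs
  have hk : ∀ k, Tendsto (fun j => ⟪y k, y (φ j)⟫) atTop (nhds (L k)) := by
    intro k
    exact tendsto_pi_nhds.mp hconv k
  -- Step 2: for every f, the sequence ⟪f, y (φ j)⟫ is Cauchy.
  set K : Submodule ℝ H := (Submodule.span ℝ (Set.range y)).topologicalClosure with hK
  have hmemK : ∀ n, y n ∈ K := fun n =>
    Submodule.le_topologicalClosure _ (Submodule.subset_span ⟨n, rfl⟩)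
  have hspan : ∀ f ∈ Submodule.span ℝ (Set.range y),
      ∃ l : ℝ, Tendsto (fun j => ⟪f, y (φ j)⟫) atTop (nhds l) := by
    intro f hf
    induction hf using Submodule.span_induction with
    | mem x hx =>
        obtain ⟨k, rfl⟩ := hx
        exact ⟨L k, hk k⟩
    | zero =>
        refine ⟨0, ?_⟩
        simp only [inner_zero_left]
        exact tendsto_const_nhds
    | add a b ha hb iha ihb =>
        obtain ⟨la, hla⟩ := iha
        obtain ⟨lb, hlb⟩ := ihb
        refine ⟨la + lb, ?_⟩
        have := hla.add hlb
        simpa [inner_add_left] using this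
    | smul c a ha iha =>
        obtain ⟨la, hla⟩ := iha
        refine ⟨c * la, ?_⟩
        have := hla.const_mul c
        simpa [real_inner_smul_left] using this
  have hcauchy_closure : ∀ f ∈ K, CauchySeq (fun j => ⟪f, y (φ j)⟫) := by
    intro f hf
    rw [Metric.cauchySeq_iff]
    intro ε hε
    -- find a nearby element of the span
    have hfc : f ∈ closure (Submodule.span ℝ (Set.range y) : Set H) := hf
    have hpos : (0:ℝ) < ε / (3 * (M + 1)) := by
      have hM0 : (0:ℝ) ≤ M := (norm_nonneg _).trans (hM 0)
      positivity
    obtain ⟨a, ha, hdist⟩ := Metric.mem_closure_iff.mp hfc _ hpos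
    obtain ⟨l, hl⟩ := hspan a ha
    obtain ⟨N, hN⟩ := (Metric.cauchySeq_iff.mp hl.cauchySeq) (ε/3) (by positivity)
    refine ⟨N, fun m hm n hn => ?_⟩
    have hbound : ∀ j : ℕ, dist (⟪f, y (φ j)⟫) (⟪a, y (φ j)⟫) ≤ ε / 3 := by
      intro j
      have h1 : dist (⟪f, y (φ j)⟫) (⟪a, y (φ j)⟫) = |⟪f - a, y (φ j)⟫| := by
        rw [Real.dist_eq, ← inner_sub_left]
      rw [h1]
      have h2 : |⟪f - a, y (φ j)⟫| ≤ ‖f - a‖ * ‖y (φ j)‖ := abs_real_inner_le_norm _ _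
      have h3 : ‖f - a‖ * ‖y (φ j)‖ ≤ ‖f - a‖ * (M + 1) := by
        have hM0 : (0:ℝ) ≤ M := (norm_nonneg _).trans (hM 0)
        exact mul_le_mul_of_nonneg_left ((hM _).trans (by linarith)) (norm_nonneg _)
      have h4 : ‖f - a‖ * (M + 1) ≤ ε / 3 := by
        have hM0 : (0:ℝ) ≤ M := (norm_nonneg _).trans (hM 0)
        have : ‖f - a‖ < ε / (3 * (M + 1)) := by
          rw [← dist_eq_norm]; exact hdist
        have hMp : (0:ℝ) < M + 1 := by linarith
        calc ‖f - a‖ * (M + 1) ≤ (ε / (3 * (M + 1))) * (M + 1) :=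
              mul_le_mul_of_nonneg_right this.le hMp.le
          _ = ε / 3 := by field_simp
      linarith [h2, h3, h4]
    calc dist (⟪f, y (φ m)⟫) (⟪f, y (φ n)⟫)
        ≤ dist (⟪f, y (φ m)⟫) (⟪a, y (φ m)⟫) + dist (⟪a, y (φ m)⟫) (⟪a, y (φ n)⟫)
            + dist (⟪a, y (φ n)⟫) (⟪f, y (φ n)⟫) := dist_triangle4 _ _ _ _
      _ < ε / 3 + ε / 3 + ε / 3 := by
          have := hN m hm n hn
          have h1 := hbound m
          have h2 := hbound n
          rw [dist_comm (⟪a, y (φ n)⟫)] at *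
          -- careful: we need strict somewhere
          have := hN m hm n hn
          nlinarith [hbound m, hbound n, hN m hm n hn]
      _ = ε := by ring
  have hcauchy : ∀ f : H, CauchySeq (fun j => ⟪f, y (φ j)⟫) := by
    intro f
    have hdecomp : ∀ j, ⟪f, y (φ j)⟫ = ⟪(K.orthogonalProjection f : H), y (φ j)⟫ := by
      intro j
      have horth : f - (K.orthogonalProjection f : H) ∈ Kᗮ :=
        K.sub_starProjection_mem_orthogonal f
      have h0 : ⟪f - (K.orthogonalProjection f : H), y (φ j)⟫ = 0 := by
        have := Submodule.inner_right_of_mem_orthogonal (hmemK (φ j)) horth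
        rwa [real_inner_comm] at this
      have := inner_sub_left (𝕜 := ℝ) f ((K.orthogonalProjection f : H)) (y (φ j))
      rw [this] at h0
      linarith
    have hc : CauchySeq (fun j => ⟪(K.orthogonalProjection f : H), y (φ j)⟫) :=
      hcauchy_closure _ (K.orthogonalProjection f).2
    have heqf : (fun j => ⟪f, y (φ j)⟫)
        = (fun j => ⟪(K.orthogonalProjection f : H), y (φ j)⟫) := funext hdecomp
    rw [heqf]; exact hc
  -- Step 3: define the limit functional and represent it by Riesz.
  set F : H → ℝ := fun f => limUnder atTop (fun j => ⟪f, y (φ j)⟫) with hF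
  have hFt : ∀ f, Tendsto (fun j => ⟪f, y (φ j)⟫) atTop (nhds (F f)) := fun f =>
    (hcauchy f).tendsto_limUnder
  have hFadd : ∀ a b : H, F (a + b) = F a + F b := by
    intro a b
    refine tendsto_nhds_unique (hFt (a + b)) ?_
    have := (hFt a).add (hFt b)
    simpa [inner_add_left] using this
  have hFsmul : ∀ (c : ℝ) (a : H), F (c • a) = c * F a := by
    intro c a
    refine tendsto_nhds_unique (hFt (c • a)) ?_
    have := (hFt a).const_mul c
    simpa [real_inner_smul_left] using this
  have hFbound : ∀ f : H, ‖F f‖ ≤ M * ‖f‖ := by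
    intro f
    have : ∀ j, ‖⟪f, y (φ j)⟫‖ ≤ M * ‖f‖ := by
      intro j
      have h1 : |⟪f, y (φ j)⟫| ≤ ‖f‖ * ‖y (φ j)‖ := abs_real_inner_le_norm _ _
      have h2 : ‖f‖ * ‖y (φ j)‖ ≤ ‖f‖ * M := mul_le_mul_of_nonneg_left (hM _) (norm_nonneg _)
      calc ‖⟪f, y (φ j)⟫‖ = |⟪f, y (φ j)⟫| := rfl
        _ ≤ ‖f‖ * M := h1.trans h2
        _ = M * ‖f‖ := mul_comm _ _
    exact le_of_tendsto' ((hFt f).norm) this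
  let Flin : H →ₗ[ℝ] ℝ :=
    { toFun := F
      map_add' := hFadd
      map_smul' := hFsmul }
  let Fcl : H →L[ℝ] ℝ := LinearMap.mkContinuous Flin M hFbound
  refine ⟨φ, hφ, (InnerProductSpace.toDual ℝ H).symm Fcl, ?_⟩
  intro f
  have hrep : ⟪f, (InnerProductSpace.toDual ℝ H).symm Fcl⟫ = F f := by
    rw [real_inner_comm]
    exact InnerProductSpace.toDual_symm_apply
  rw [hrep]
  exact hFt f

/-- Opial-type lemma: if `‖x_n − x‖` converges for every `x ∈ C` and every weak
sequential cluster point of `{x_n}` lies in `C`, then `{x_n}` converges weakly to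
a point of `C`. -/
theorem statement18
    {H : Type*} [NormedAddCommGroup H] [InnerProductSpace ℝ H] [CompleteSpace H]
    (C : Set H) (hCne : C.Nonempty) (x : ℕ → H)
    (h1 : ∀ c ∈ C, ∃ l : ℝ, Tendsto (fun n => ‖x n - c‖) atTop (nhds l))
    (h2 : ∀ p : H, (∃ φ : ℕ → ℕ, StrictMono φ ∧
        ∀ f : H, Tendsto (fun j => ⟪f, x (φ j)⟫) atTop (nhds ⟪f, p⟫)) → p ∈ C) :
    ∃ p ∈ C, ∀ f : H, Tendsto (fun n => ⟪f, x n⟫) atTop (nhds ⟪f, p⟫) := by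
  classical
  obtain ⟨c₀, hc₀⟩ := hCne
  -- boundedness
  obtain ⟨l₀, hl₀⟩ := h1 c₀ hc₀
  obtain ⟨B, hB⟩ : ∃ B : ℝ, ∀ n, ‖x n - c₀‖ ≤ B := by
    have hbdd := hl₀.bddAbove_range
    obtain ⟨B, hB⟩ := hbdd
    exact ⟨B, fun n => hB ⟨n, rfl⟩⟩
  have hbound : ∀ n, ‖x n‖ ≤ B + ‖c₀‖ := by
    intro n
    calc ‖x n‖ = ‖x n - c₀ + c₀‖ := by rw [sub_add_cancel]
      _ ≤ ‖x n - c₀‖ + ‖c₀‖ := norm_add_le _ _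
      _ ≤ B + ‖c₀‖ := by linarith [hB n]
  -- extract a weak cluster point
  obtain ⟨φ, hφ, p, hp⟩ := aux_weak_seq_compact x (B + ‖c₀‖) hbound
  have hpC : p ∈ C := h2 p ⟨φ, hφ, hp⟩
  -- uniqueness of weak cluster points
  have huniq : ∀ q : H, (∃ ψ : ℕ → ℕ, StrictMono ψ ∧
      ∀ f : H, Tendsto (fun j => ⟪f, x (ψ j)⟫) atTop (nhds ⟪f, q⟫)) → q = p := by
    intro q hq
    obtain ⟨ψ, hψ, hqψ⟩ := hq
    have hqC : q ∈ C := h2 q ⟨ψ, hψ, hqψ⟩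
    obtain ⟨lp, hlp⟩ := h1 p hpC
    obtain ⟨lq, hlq⟩ := h1 q hqC
    -- the sequence ⟪x n, q - p⟫ converges
    set t : ℝ := (lp^2 - lq^2 - ‖p‖^2 + ‖q‖^2) / 2 with ht
    have hkey : Tendsto (fun n => ⟪q - p, x n⟫) atTop (nhds t) := by
      have heq : ∀ n, ⟪q - p, x n⟫ =
          (‖x n - p‖^2 - ‖x n - q‖^2 - ‖p‖^2 + ‖q‖^2) / 2 := by
        intro n
        have e1 := norm_sub_sq_real (x n) p
        have e2 := norm_sub_sq_real (x n) q
        have e3 : ⟪q - p, x n⟫ = ⟪x n, q⟫ - ⟪x n, p⟫ := by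
          rw [inner_sub_left, real_inner_comm q (x n), real_inner_comm p (x n)]
        linarith
      have : Tendsto (fun n => (‖x n - p‖^2 - ‖x n - q‖^2 - ‖p‖^2 + ‖q‖^2) / 2)
          atTop (nhds t) := by
        have h1' : Tendsto (fun n => ‖x n - p‖^2) atTop (nhds (lp^2)) := by
          simpa [pow_two] using hlp.mul hlp
        have h2' : Tendsto (fun n => ‖x n - q‖^2) atTop (nhds (lq^2)) := by
          simpa [pow_two] using hlq.mul hlq
        rw [ht]
        exact (((h1'.sub h2').sub (tendsto_const_nhds (x := ‖p‖^2))).add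
          (tendsto_const_nhds (x := ‖q‖^2))).div_const 2
      exact this.congr (fun n => (heq n).symm)
    have hp' : Tendsto (fun j => ⟪q - p, x (φ j)⟫) atTop (nhds ⟪q - p, p⟫) := hp (q - p)
    have hq' : Tendsto (fun j => ⟪q - p, x (ψ j)⟫) atTop (nhds ⟪q - p, q⟫) := hqψ (q - p)
    have hφt : Tendsto (fun j => ⟪q - p, x (φ j)⟫) atTop (nhds t) :=
      hkey.comp hφ.tendsto_atTop
    have hψt : Tendsto (fun j => ⟪q - p, x (ψ j)⟫) atTop (nhds t) :=
      hkey.comp hψ.tendsto_atTop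
    have h5 : ⟪q - p, p⟫ = t := tendsto_nhds_unique hp' hφt
    have h6 : ⟪q - p, q⟫ = t := tendsto_nhds_unique hq' hψt
    have h7 : ⟪q - p, q - p⟫ = (0:ℝ) := by
      rw [inner_sub_right]; linarith
    have h8 : q - p = 0 := by
      have := inner_self_eq_zero (𝕜 := ℝ) (x := q - p)
      exact this.mp h7
    exact sub_eq_zero.mp h8
  -- whole sequence converges weakly to p
  refine ⟨p, hpC, fun f => ?_⟩
  by_contra hcon
  -- get a subsequence staying away from the limit
  have hfreq : ∃ ε > 0, ∃ᶠ n in atTop, ε ≤ dist (⟪f, x n⟫) (⟪f, p⟫) := by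
    by_contra hno
    push_neg at hno
    apply hcon
    rw [Metric.tendsto_atTop]
    intro ε hε
    have := hno (ε/2) (by positivity)
    rw [Filter.eventually_atTop] at this
    obtain ⟨N, hN⟩ := this
    refine ⟨N, fun n hn => ?_⟩
    have := hN n hn
    linarith
  obtain ⟨ε, hε, hfr⟩ := hfreq
  obtain ⟨ψ, hψ, hψprop⟩ := Filter.extraction_of_frequently_atTop hfr
  -- extract a weakly convergent subsubsequence
  have hbψ : ∀ j, ‖x (ψ j)‖ ≤ B + ‖c₀‖ := fun j => hbound (ψ j)
  obtain ⟨θ, hθ, q, hqθ⟩ := aux_weak_seq_compact (fun j => x (ψ j)) (B + ‖c₀‖) hbψ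
  have hq : q = p := huniq q ⟨ψ ∘ θ, hψ.comp hθ, fun g => hqθ g⟩
  subst hq
  have := hqθ f
  have hlim : Tendsto (fun j => dist (⟪f, x (ψ (θ j))⟫) (⟪f, q⟫)) atTop (nhds 0) := by
    have := (hqθ f).sub (tendsto_const_nhds (x := ⟪f, q⟫))
    simp only [sub_self] at this
    have habs := this.abs
    simp only [abs_zero] at habs
    exact habs.congr (fun j => by rw [Real.dist_eq])
  have hcontra : ∀ j, ε ≤ dist (⟪f, x (ψ (θ j))⟫) (⟪f, q⟫) := fun j => hψprop (θ j)
  have : ε ≤ 0 := le_of_tendsto_of_tendsto' tendsto_const_nhds hlim hcontra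
  linarith
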